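/- Let i ∈ {1,…,n_c} and suppose σ_i = sup Γ_i is finite. Then for every v ∈ 𝒱 and every r with 0 ≤ r ≤ σ_i, one has N(v,r) ≥ n_c − i, i.e., the closed ball B(v,r) is contained in at least n_c − i of the half-spaces 𝒱_j. -/

import Mathlib

/-- Lemma 6(b): if `σ_i = sup Γ_i` is finite, then for every `v ∈ 𝒱` and
every `0 ≤ r ≤ σ_i`, the ball `B(v,r)` is contained in at least `n_c − i` half-spaces. -/
theorem ball_in_enough_halfspaces_of_le_sigma
    (n_x n_z n_c : ℕ) (hnx : 0 < n_x) (hnz : 0 < n_z) (hnc : 0 < n_c)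
    (G : Matrix (Fin n_c) (Fin n_z) ℝ)
    (S : Matrix (Fin n_c) (Fin n_x) ℝ)
    (w : Fin n_c → ℝ)
    (Vl : Set (WithLp 2 (EuclideanSpace ℝ (Fin n_x) × EuclideanSpace ℝ (Fin n_z))))
    (hVl : Vl = {v | ∀ j, dotProduct (G j) ((WithLp.equiv 2 _) v).2
      ≤ dotProduct (S j) ((WithLp.equiv 2 _) v).1 + w j})
    (N : WithLp 2 (EuclideanSpace ℝ (Fin n_x) × EuclideanSpace ℝ (Fin n_z)) → ℝ → ℕ)
    (hN : ∀ v r, N v r = Set.ncard {j : Fin n_c | Metric.closedBall v r ⊆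
      {u | dotProduct (G j) ((WithLp.equiv 2 _) u).2
        - dotProduct (S j) ((WithLp.equiv 2 _) u).1 ≤ w j}})
    (Γ : ℕ → Set ℝ)
    (hΓ : ∀ i, Γ i = {r : ℝ | 0 ≤ r ∧ ∀ v ∈ Vl, n_c - i ≤ N v r})
    (hVlne : Vl.Nonempty)
    (i : ℕ) (hi : 1 ≤ i) (hin : i ≤ n_c)
    (hfin : sSup (ENNReal.ofReal '' Γ i) ≠ ⊤) :
    ∀ v ∈ Vl, ∀ r : ℝ, 0 ≤ r →
      ENNReal.ofReal r ≤ sSup (ENNReal.ofReal '' Γ i) → n_c - i ≤ N v r := by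
  intro v hv r hr hrle
  -- the half-space sets
  set H : Fin n_c → Set (WithLp 2 (EuclideanSpace ℝ (Fin n_x) × EuclideanSpace ℝ (Fin n_z))) :=
    fun j => {u | dotProduct (G j) ((WithLp.equiv 2 _) u).2
        - dotProduct (S j) ((WithLp.equiv 2 _) u).1 ≤ w j} with hH
  set J : ℝ → Set (Fin n_c) := fun s => {j : Fin n_c | Metric.closedBall v s ⊆ H j} with hJ
  have hNJ : ∀ s, N v s = (J s).ncard := fun s => hN v s
  -- monotonicity : smaller radius gives more half-spaces
  have hmono : ∀ s t : ℝ, s ≤ t → J t ⊆ J s := by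
    intro s t hst j hj
    exact fun u hu => hj (Metric.closedBall_subset_closedBall hst hu)
  -- the bound holds strictly below r
  have hbelow : ∀ s : ℝ, 0 ≤ s → s < r → n_c - i ≤ (J s).ncard := by
    intro s hs hsr
    have hr0 : 0 < r := lt_of_le_of_lt hs hsr
    have h1 : ENNReal.ofReal s < sSup (ENNReal.ofReal '' Γ i) :=
      lt_of_lt_of_le ((ENNReal.ofReal_lt_ofReal_iff hr0).mpr hsr) hrle
    obtain ⟨a, ⟨t, htΓ, rfl⟩, hlt⟩ := lt_sSup_iff.mp h1
    have hst : s < t := (ENNReal.ofReal_lt_ofReal_iff_of_nonneg hs).mp hlt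
    rw [hΓ] at htΓ
    have hNt : n_c - i ≤ N v t := htΓ.2 v hv
    rw [hNJ] at hNt
    exact le_trans hNt (Set.ncard_le_ncard (hmono s t hst.le) (Set.toFinite _))
  rw [hNJ]
  rcases eq_or_lt_of_le hr with hr0 | hr0
  · -- r = 0 : v itself satisfies all constraints
    have : J r = Set.univ := by
      ext j
      simp only [hJ, Set.mem_setOf_eq, Set.mem_univ, iff_true]
      intro u hu
      have : u = v := by
        have := Metric.mem_closedBall.mp hu
        rw [← hr0] at this
        exact dist_le_zero.mp this
      subst this
      rw [hVl] at hv
      have := hv j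
      simp only [hH, Set.mem_setOf_eq]
      linarith
    rw [this]
    rw [Set.ncard_univ]
    simp
  · -- r > 0
    -- half-spaces are closed
    have hclosed : ∀ j, IsClosed (H j) := by
      intro j
      have hcont : Continuous fun u : WithLp 2 (EuclideanSpace ℝ (Fin n_x) × EuclideanSpace ℝ (Fin n_z)) =>
          dotProduct (G j) ((WithLp.equiv 2 _) u).2
            - dotProduct (S j) ((WithLp.equiv 2 _) u).1 := by
        unfold dotProduct
        have h := WithLp.prod_continuous_ofLp 2 (EuclideanSpace ℝ (Fin n_x))
          (EuclideanSpace ℝ (Fin n_z))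
        fun_prop
      exact isClosed_le hcont continuous_const
    -- closedness step: if a half-space contains all smaller closed balls, it contains B(v,r)
    have hlimit : ∀ j, (∀ s : ℝ, 0 ≤ s → s < r → j ∈ J s) → j ∈ J r := by
      intro j hjs
      have hball : Metric.ball v r ⊆ H j := by
        intro u hu
        have : u ∈ Metric.closedBall v (dist u v) := Metric.mem_closedBall.mpr le_rfl
        exact hjs (dist u v) dist_nonneg (Metric.mem_ball.mp hu) this
      have : Metric.closedBall v r ⊆ H j := by
        rw [← closure_ball v (ne_of_gt hr0)]
        exact (hclosed j).closure_subset_iff.mpr hball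
      exact this
    -- minimal cardinality over radii in [0, r)
    set M : Set ℕ := {m : ℕ | ∃ s : ℝ, 0 ≤ s ∧ s < r ∧ (J s).ncard = m} with hM
    have hMne : M.Nonempty := ⟨(J 0).ncard, 0, le_refl 0, hr0, rfl⟩
    obtain ⟨s₀, hs₀0, hs₀r, hs₀card⟩ := Nat.sInf_mem hMne
    -- J s₀ ⊆ J r
    have hsub : J s₀ ⊆ J r := by
      intro j hj
      apply hlimit
      intro s hs hsr
      rcases le_total s s₀ with hss | hss
      · exact hmono s s₀ hss hj
      · -- s₀ ≤ s : J s ⊆ J s₀ with ncard J s ≥ ncard J s₀, hence equal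
        have h1 : J s ⊆ J s₀ := hmono s₀ s hss
        have h2 : (J s₀).ncard ≤ (J s).ncard := by
          rw [hs₀card]
          exact Nat.sInf_le ⟨s, hs, hsr, rfl⟩
        have := Set.eq_of_subset_of_ncard_le h1 h2 (Set.toFinite _)
        rw [this]
        exact hj
    calc n_c - i ≤ (J s₀).ncard := hbelow s₀ hs₀0 hs₀r
      _ ≤ (J r).ncard := Set.ncard_le_ncard hsub (Set.toFinite _)
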